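/- Five-lemma comparison for filtered objects in triangulated categories: Let Φ: C → D be an additive functor between triangulated categories commuting with translation and sending distinguished triangles to distinguished triangles. Let X, Y be objects of C equipped with finite decreasing filtrations F^i X, F^i Y (with F^i = everything for i << 0, F^i = 0 for i >> 0) and distinguished triangles F^{i+1}X → F^i X → X^i → T F^{i+1}X and similarly for Y. If Hom_C(X^i, Y^j) → Hom_D(Φ X^i, Φ Y^j) is surjective and Hom_C(X^i, T Y^j) → Hom_D(Φ X^i, Φ(T Y^j)) is injective for all i, j, then Hom_C(X, Y) → Hom_D(Φ X, Φ Y) is surjective. -/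

import Mathlib

open CategoryTheory CategoryTheory.Limits CategoryTheory.Pretriangulated

section Aux

set_option linter.unusedSectionVars false

variable {C D : Type*} [Category C] [Category D]
    [HasShift C ℤ] [HasShift D ℤ] [Preadditive C] [Preadditive D]
    [HasZeroObject C] [HasZeroObject D]
    [∀ n : ℤ, (shiftFunctor C n).Additive] [∀ n : ℤ, (shiftFunctor D n).Additive]
    [Pretriangulated C] [Pretriangulated D]
    (Φ : C ⥤ D) [Φ.Additive] [Φ.CommShift ℤ] [Φ.IsTriangulated]

lemma st16_injAux {X Y : C} (h : ∀ φ : X ⟶ Y, Φ.map φ = 0 → φ = 0) :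
    Function.Injective (fun φ : X ⟶ Y => Φ.map φ) := by
  intro φ₁ φ₂ hφ
  rw [← sub_eq_zero]
  apply h
  simp only at hφ
  rw [Φ.map_sub, hφ, sub_self]

lemma st16_injAux' {X Y : C} (h : Function.Injective (fun φ : X ⟶ Y => Φ.map φ))
    {φ : X ⟶ Y} (hφ : Φ.map φ = 0) : φ = 0 := by
  apply h
  simpa using hφ

/-- Transfer injectivity across the shift. -/
lemma st16_shiftInj (P Q : C)
    (h : Function.Injective (fun φ : P ⟶ Q⟦(1 : ℤ)⟧ => Φ.map φ)) :
    Function.Injective (fun φ : P⟦(-1 : ℤ)⟧ ⟶ Q => Φ.map φ) := by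
  apply st16_injAux
  intro φ hφ
  have h1 : Φ.map (φ⟦(1 : ℤ)⟧') = 0 := by
    have := (Φ.commShiftIso (1 : ℤ)).hom.naturality φ
    simp only [Functor.comp_map] at this
    rw [← cancel_mono ((Φ.commShiftIso (1 : ℤ)).hom.app Q), this, zero_comp, hφ,
      Functor.map_zero, comp_zero]
  have h2 : ((shiftFunctorCompIsoId C (-1) 1 (by norm_num)).app P).inv ≫ φ⟦(1 : ℤ)⟧' = 0 := by
    apply st16_injAux' Φ h
    rw [Φ.map_comp, h1, comp_zero]
  have h3 : φ⟦(1 : ℤ)⟧' = 0 := by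
    rw [← cancel_epi (((shiftFunctorCompIsoId C (-1) 1 (by norm_num)).app P).inv), h2, comp_zero]
  exact (shiftFunctor C (1 : ℤ)).map_injective (by rw [h3, Functor.map_zero])

lemma st16_auxY (A : C)
    (FY : ℤ → C) (fY : ∀ j : ℤ, FY (j + 1) ⟶ FY j) (GY : ℤ → C)
    (uY : ∀ j : ℤ, FY j ⟶ GY j) (wY : ∀ j : ℤ, GY j ⟶ (FY (j + 1))⟦(1 : ℤ)⟧)
    (hY : ∀ j : ℤ, Triangle.mk (fY j) (uY j) (wY j) ∈ distinguishedTriangles)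
    (b : ℤ) (hb : ∀ j ≥ b, IsZero (FY j))
    (hs : ∀ j, Function.Surjective (fun φ : A ⟶ GY j => Φ.map φ))
    (hi : ∀ j, Function.Injective (fun φ : A ⟶ (GY j)⟦(1 : ℤ)⟧ => Φ.map φ)) :
    ∀ j, Function.Surjective (fun φ : A ⟶ FY j => Φ.map φ) ∧
      Function.Injective (fun φ : A ⟶ (FY j)⟦(1 : ℤ)⟧ => Φ.map φ) := by
  -- base case
  have base : ∀ j, b ≤ j → Function.Surjective (fun φ : A ⟶ FY j => Φ.map φ) ∧
      Function.Injective (fun φ : A ⟶ (FY j)⟦(1 : ℤ)⟧ => Φ.map φ) := by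
    intro j hj
    constructor
    · intro β
      refine ⟨0, ?_⟩
      show Φ.map 0 = β
      rw [Φ.map_zero]
      exact ((Φ.map_isZero (hb j hj)).eq_of_tgt _ _).symm
    · apply st16_injAux
      intro φ _
      exact ((shiftFunctor C (1 : ℤ)).map_isZero (hb j hj)).eq_of_tgt _ _
  -- inductive step
  have step : ∀ j : ℤ,
      (Function.Surjective (fun φ : A ⟶ FY (j + 1) => Φ.map φ) ∧
        Function.Injective (fun φ : A ⟶ (FY (j + 1))⟦(1 : ℤ)⟧ => Φ.map φ)) →
      Function.Surjective (fun φ : A ⟶ FY j => Φ.map φ) ∧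
        Function.Injective (fun φ : A ⟶ (FY j)⟦(1 : ℤ)⟧ => Φ.map φ) := by
    intro j ih
    constructor
    · -- surjectivity at FY j
      intro β
      obtain ⟨γ, hγ⟩ := hs j (β ≫ Φ.map (uY j))
      simp only at hγ
      have hobs : γ ≫ wY j = 0 := by
        apply st16_injAux' Φ ih.2
        rw [Φ.map_comp, hγ, Category.assoc, ← Φ.map_comp,
          (show uY j ≫ wY j = 0 from comp_distTriang_mor_zero₂₃ _ (hY j)),
          Φ.map_zero, comp_zero]
      obtain ⟨δ, hδ⟩ := Triangle.coyoneda_exact₃ _ (hY j) γ hobs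
      change A ⟶ FY j at δ
      replace hδ : γ = δ ≫ uY j := hδ
      obtain ⟨ε, hε⟩ := Triangle.coyoneda_exact₂
        (Φ.mapTriangle.obj (Triangle.mk (fY j) (uY j) (wY j)))
        (Φ.map_distinguished _ (hY j)) (β - Φ.map δ) (by
          show (β - Φ.map δ) ≫ Φ.map (uY j) = 0
          rw [Preadditive.sub_comp, ← Φ.map_comp, ← hδ, hγ, sub_self])
      change Φ.obj A ⟶ Φ.obj (FY (j + 1)) at ε
      replace hε : β - Φ.map δ = ε ≫ Φ.map (fY j) := hε
      obtain ⟨e, he⟩ := ih.1 ε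
      simp only at he
      refine ⟨δ + e ≫ fY j, ?_⟩
      show Φ.map _ = β
      rw [Φ.map_add, Φ.map_comp, he, ← hε]
      abel
    · -- injectivity at (FY j)⟦1⟧
      apply st16_injAux
      intro x hx
      have hT'' : (Triangle.mk (fY j) (uY j) (wY j)).rotate.rotate ∈ distinguishedTriangles :=
        rot_of_distTriang _ (rot_of_distTriang _ (hY j))
      have h1 : x ≫ (Triangle.mk (fY j) (uY j) (wY j)).rotate.rotate.mor₃ = 0 := by
        apply st16_injAux' Φ (hi j)
        erw [Φ.map_comp, hx, zero_comp]
      obtain ⟨y, hy⟩ := Triangle.coyoneda_exact₃ _ hT'' x h1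
      change A ⟶ (FY (j + 1))⟦(1 : ℤ)⟧ at y
      obtain ⟨z, hz⟩ := Triangle.coyoneda_exact₂
        (Φ.mapTriangle.obj ((Triangle.mk (fY j) (uY j) (wY j)).rotate.rotate))
        (Φ.map_distinguished _ hT'') (Φ.map y) (by
          show Φ.map y ≫ Φ.map ((Triangle.mk (fY j) (uY j) (wY j)).rotate.rotate.mor₂) = 0
          erw [← Φ.map_comp, ← hy, hx]; rfl)
      change Φ.obj A ⟶ Φ.obj (GY j) at z
      replace hz : Φ.map y =
        z ≫ Φ.map ((Triangle.mk (fY j) (uY j) (wY j)).rotate.rotate.mor₁) := hz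
      obtain ⟨zt, hzt⟩ := hs j z
      simp only at hzt
      have hy' : y = zt ≫ (Triangle.mk (fY j) (uY j) (wY j)).rotate.rotate.mor₁ := by
        erw [← sub_eq_zero]
        apply st16_injAux' Φ ih.2
        erw [Φ.map_sub, Φ.map_comp, hzt, ← hz, sub_self]
      erw [hy, hy', Category.assoc, comp_distTriang_mor_zero₁₂ _ hT'', comp_zero]; rfl
  -- downward induction
  have key : ∀ n : ℕ, ∀ j : ℤ, b ≤ j + n →
      Function.Surjective (fun φ : A ⟶ FY j => Φ.map φ) ∧
        Function.Injective (fun φ : A ⟶ (FY j)⟦(1 : ℤ)⟧ => Φ.map φ) := by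
    intro n
    induction n with
    | zero => intro j hj; exact base j (by omega)
    | succ n ih =>
        intro j hj
        exact step j (ih (j + 1) (by push_cast; omega))
  intro j
  exact key (b - j).toNat j (by omega)

lemma st16_auxX (B : C)
    (FX : ℤ → C) (fX : ∀ i : ℤ, FX (i + 1) ⟶ FX i) (GX : ℤ → C)
    (uX : ∀ i : ℤ, FX i ⟶ GX i) (wX : ∀ i : ℤ, GX i ⟶ (FX (i + 1))⟦(1 : ℤ)⟧)
    (hX : ∀ i : ℤ, Triangle.mk (fX i) (uX i) (wX i) ∈ distinguishedTriangles)
    (b : ℤ) (hb : ∀ i ≥ b, IsZero (FX i))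
    (hs : ∀ i, Function.Surjective (fun φ : GX i ⟶ B => Φ.map φ))
    (hi : ∀ i, Function.Injective (fun φ : (GX i)⟦(-1 : ℤ)⟧ ⟶ B => Φ.map φ)) :
    ∀ i, Function.Surjective (fun φ : FX i ⟶ B => Φ.map φ) := by
  have base : ∀ i, b ≤ i → Function.Surjective (fun φ : FX i ⟶ B => Φ.map φ) := by
    intro i hi' β
    refine ⟨0, ?_⟩
    show Φ.map 0 = β
    rw [Φ.map_zero]
    exact ((Φ.map_isZero (hb i hi')).eq_of_src _ _).symm
  have step : ∀ i : ℤ, Function.Surjective (fun φ : FX (i + 1) ⟶ B => Φ.map φ) →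
      Function.Surjective (fun φ : FX i ⟶ B => Φ.map φ) := by
    intro i ih β
    obtain ⟨α, hα⟩ := ih (Φ.map (fX i) ≫ β)
    simp only at hα
    have hT' : (Triangle.mk (fX i) (uX i) (wX i)).invRotate ∈ distinguishedTriangles :=
      inv_rot_of_distTriang _ (hX i)
    have hobs : (Triangle.mk (fX i) (uX i) (wX i)).invRotate.mor₁ ≫ α = 0 := by
      apply st16_injAux' Φ (hi i)
      erw [Φ.map_comp, hα, ← Category.assoc, ← Φ.map_comp,
        (show (Triangle.mk (fX i) (uX i) (wX i)).invRotate.mor₁ ≫ fX i = 0 from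
          comp_distTriang_mor_zero₁₂ _ hT'),
        Φ.map_zero, zero_comp]
    obtain ⟨γ, hγ⟩ := Triangle.yoneda_exact₂ _ hT' α hobs
    change FX i ⟶ B at γ
    replace hγ : α = fX i ≫ γ := hγ
    obtain ⟨δ, hδ⟩ := Triangle.yoneda_exact₂
      (Φ.mapTriangle.obj (Triangle.mk (fX i) (uX i) (wX i)))
      (Φ.map_distinguished _ (hX i)) (β - Φ.map γ) (by
        show Φ.map (fX i) ≫ (β - Φ.map γ) = 0
        rw [Preadditive.comp_sub, ← Φ.map_comp, ← hγ, hα, sub_self])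
    change Φ.obj (GX i) ⟶ Φ.obj B at δ
    replace hδ : β - Φ.map γ = Φ.map (uX i) ≫ δ := hδ
    obtain ⟨d, hd⟩ := hs i δ
    simp only at hd
    refine ⟨γ + uX i ≫ d, ?_⟩
    show Φ.map _ = β
    rw [Φ.map_add, Φ.map_comp, hd, ← hδ]
    abel
  have key : ∀ n : ℕ, ∀ i : ℤ, b ≤ i + n →
      Function.Surjective (fun φ : FX i ⟶ B => Φ.map φ) := by
    intro n
    induction n with
    | zero => intro i hi'; exact base i (by omega)
    | succ n ih => intro i hi'; exact step i (ih (i + 1) (by omega))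
  intro i
  exact key (b - i).toNat i (by omega)

end Aux


/-- five-lemma comparison for filtered objects in triangulated categories.
Let `Φ : C → D` be an additive functor between triangulated categories commuting with
translation and sending distinguished triangles to distinguished triangles.  Let `X, Y`
be objects of `C` with finite decreasing filtrations `F^i X` (with `F^i X = X` for
`i ≤ a`, expressed by the transition maps being isomorphisms below `a`, and `F^i X = 0`
for large `i`) together with distinguished triangles
`F^{i+1}X → F^i X → X^i → T F^{i+1}X`, and similarly for `Y`.  If
`Hom_C(X^i, Y^j) → Hom_D(Φ X^i, Φ Y^j)` is surjective and
`Hom_C(X^i, T Y^j) → Hom_D(Φ X^i, Φ (T Y^j))` is injective for all `i, j`, then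
`Hom_C(X, Y) → Hom_D(Φ X, Φ Y)` is surjective (where `X = F^a X`, `Y = F^{a'} Y`). -/
theorem statement16 {C D : Type*} [Category C] [Category D]
    [HasShift C ℤ] [HasShift D ℤ] [Preadditive C] [Preadditive D]
    [HasZeroObject C] [HasZeroObject D]
    [∀ n : ℤ, (shiftFunctor C n).Additive] [∀ n : ℤ, (shiftFunctor D n).Additive]
    [Pretriangulated C] [Pretriangulated D]
    (Φ : C ⥤ D) [Φ.Additive] [Φ.CommShift ℤ] [Φ.IsTriangulated]
    -- the filtration of `X`, with graded pieces `GX i`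
    (FX : ℤ → C) (fX : ∀ i : ℤ, FX (i + 1) ⟶ FX i) (GX : ℤ → C)
    (uX : ∀ i : ℤ, FX i ⟶ GX i) (wX : ∀ i : ℤ, GX i ⟶ (FX (i + 1))⟦(1 : ℤ)⟧)
    (hX : ∀ i : ℤ, Triangle.mk (fX i) (uX i) (wX i) ∈ distinguishedTriangles)
    (a : ℤ) (haX : ∀ i < a, IsIso (fX i))
    (hbX : ∃ b : ℤ, ∀ i ≥ b, IsZero (FX i))
    -- the filtration of `Y`, with graded pieces `GY j`
    (FY : ℤ → C) (fY : ∀ j : ℤ, FY (j + 1) ⟶ FY j) (GY : ℤ → C)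
    (uY : ∀ j : ℤ, FY j ⟶ GY j) (wY : ∀ j : ℤ, GY j ⟶ (FY (j + 1))⟦(1 : ℤ)⟧)
    (hY : ∀ j : ℤ, Triangle.mk (fY j) (uY j) (wY j) ∈ distinguishedTriangles)
    (a' : ℤ) (haY : ∀ j < a', IsIso (fY j))
    (hbY : ∃ b : ℤ, ∀ j ≥ b, IsZero (FY j))
    -- the comparison hypotheses on the graded pieces
    (hsurj : ∀ i j : ℤ, Function.Surjective (fun φ : GX i ⟶ GY j => Φ.map φ))
    (hinj : ∀ i j : ℤ,
      Function.Injective (fun φ : GX i ⟶ (GY j)⟦(1 : ℤ)⟧ => Φ.map φ)) :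
    Function.Surjective (fun φ : FX a ⟶ FY a' => Φ.map φ) := by
  obtain ⟨bY, hbY⟩ := hbY
  obtain ⟨bX, hbX⟩ := hbX
  have hYlem := fun i : ℤ =>
    st16_auxY Φ (GX i) FY fY GY uY wY hY bY hbY (hsurj i) (hinj i)
  have hs' : ∀ i, Function.Surjective (fun φ : GX i ⟶ FY a' => Φ.map φ) :=
    fun i => (hYlem i a').1
  have hi' : ∀ i, Function.Injective (fun φ : (GX i)⟦(-1 : ℤ)⟧ ⟶ FY a' => Φ.map φ) :=
    fun i => st16_shiftInj Φ _ _ ((hYlem i a').2)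
  exact st16_auxX Φ (FY a') FX fX GX uX wX hX bX hbX hs' hi' a
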